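/- arXiv:0803.2371 — 10 statements merged into one kernel-verified Lean document; each statement's English description precedes it below -/
import Mathlib

section
/- Let Z, N, A be n×n real matrices and let I denote the n×n identity matrix. Then rank(A − Z·A·N) ≤ rank(Zᵀ·A − A·N) + rank(I − Z·Zᵀ). (In displacement notation: δ^∇_{Z,N}{A} ≤ δ^Δ_{Zᵀ,N}{A} + δ^∇_{Z,Zᵀ}{I}.) -/
open Matrix

lemma matrix_rank_add_le {n : ℕ} (A B : Matrix (Fin n) (Fin n) ℝ) :
    (A + B).rank ≤ A.rank + B.rank := by
  have h : LinearMap.range (A + B).mulVecLin ≤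
      LinearMap.range A.mulVecLin ⊔ LinearMap.range B.mulVecLin := by
    rintro x ⟨v, rfl⟩
    exact Submodule.mem_sup.mpr ⟨A.mulVecLin v, ⟨v, rfl⟩, B.mulVecLin v, ⟨v, rfl⟩,
      by simp [Matrix.add_mulVec]⟩
  exact (Submodule.finrank_mono h).trans
    (Submodule.finrank_add_le_finrank_add_finrank _ _)

theorem displacement_nabla_le_delta (n : ℕ) (Z N A : Matrix (Fin n) (Fin n) ℝ) :
    (A - Z * A * N).rank ≤ (Zᵀ * A - A * N).rank + ((1 : Matrix (Fin n) (Fin n) ℝ) - Z * Zᵀ).rank := by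
  have key : A - Z * A * N = Z * (Zᵀ * A - A * N) + ((1 : Matrix (Fin n) (Fin n) ℝ) - Z * Zᵀ) * A := by
    noncomm_ring
  rw [key]
  refine (matrix_rank_add_le _ _).trans (add_le_add ?_ ?_)
  · exact rank_mul_le_right _ _
  · exact rank_mul_le_left _ _
end

section
/- Let A be an invertible n×n real matrix and let Z, N be n×n real matrices. Then rank(Z·A − A·N) = rank(N·A⁻¹ − A⁻¹·Z). That is, A and A⁻¹ have the same Δ-displacement rank with respect to dual displacement patterns: δ^Δ_{Z,N}{A} = δ^Δ_{N,Z}{A⁻¹}. -/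
open Matrix

theorem delta_displacement_rank_inverse (n : ℕ) (A Z N : Matrix (Fin n) (Fin n) ℝ)
    (hA : IsUnit A.det) :
    (Z * A - A * N).rank = (N * A⁻¹ - A⁻¹ * Z).rank := by
  have hinv : IsUnit A⁻¹.det := by
    rw [Matrix.det_nonsing_inv]
    exact hA.ringInverse
  have key : N * A⁻¹ - A⁻¹ * Z = -(A⁻¹ * (Z * A - A * N) * A⁻¹) := by
    rw [Matrix.mul_sub, Matrix.sub_mul, ← Matrix.mul_assoc A⁻¹ Z A,
      Matrix.mul_nonsing_inv_cancel_right _ _ hA,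
      Matrix.nonsing_inv_mul_cancel_left _ _ hA, neg_sub]
  rw [key]
  rw [show -(A⁻¹ * (Z * A - A * N) * A⁻¹) = (-A⁻¹) * (Z * A - A * N) * A⁻¹ by noncomm_ring]
  have hneg : IsUnit (-A⁻¹).det := by
    rw [Matrix.det_neg]
    exact ((isUnit_one.neg.pow _)).mul hinv
  rw [Matrix.rank_mul_eq_left_of_isUnit_det _ _ hinv,
    Matrix.rank_mul_eq_right_of_isUnit_det _ _ hneg]
end

section
/- Let A be an invertible n×n real matrix and let Z, N be n×n real matrices. Then rank(A − Z·A·N) = rank(A⁻¹ − N·A⁻¹·Z). That is, A and A⁻¹ have the same ∇-displacement rank with respect to dual displacement patterns: δ^∇_{Z,N}{A} = δ^∇_{N,Z}{A⁻¹}. -/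
open Matrix

lemma rank_one_sub_mul_comm (n : ℕ) (P Q : Matrix (Fin n) (Fin n) ℝ) :
    (1 - P * Q).rank = (1 - Q * P).rank := by
  have key : ∀ P Q : Matrix (Fin n) (Fin n) ℝ,
      Module.finrank ℝ (LinearMap.ker (1 - P * Q).mulVecLin) ≤
      Module.finrank ℝ (LinearMap.ker (1 - Q * P).mulVecLin) := by
    intro P Q
    have hmem : ∀ v ∈ LinearMap.ker (1 - P * Q).mulVecLin,
        Q.mulVecLin v ∈ LinearMap.ker (1 - Q * P).mulVecLin := by
      intro v hv
      simp only [LinearMap.mem_ker, mulVecLin_apply, sub_mulVec, one_mulVec,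
        sub_eq_zero] at hv ⊢
      conv_lhs => rw [hv]
      simp [Matrix.mulVec_mulVec, Matrix.mul_assoc]
    refine LinearMap.finrank_le_finrank_of_injective
      (f := LinearMap.codRestrict _ (Q.mulVecLin.comp (LinearMap.ker (1 - P * Q).mulVecLin).subtype)
        (fun x => hmem x x.2)) ?_
    intro x y hxy
    have hx := x.2
    have hy := y.2
    simp only [LinearMap.mem_ker, mulVecLin_apply, sub_mulVec, one_mulVec,
      sub_eq_zero] at hx hy
    have h : Q.mulVec (x : Fin n → ℝ) = Q.mulVec (y : Fin n → ℝ) := by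
      exact congrArg Subtype.val hxy
    ext1
    rw [hx, hy, ← Matrix.mulVec_mulVec, ← Matrix.mulVec_mulVec, h]
  have h1 := ((1 - P * Q).mulVecLin).finrank_range_add_finrank_ker
  have h2 := ((1 - Q * P).mulVecLin).finrank_range_add_finrank_ker
  have hker : Module.finrank ℝ (LinearMap.ker (1 - P * Q).mulVecLin) =
      Module.finrank ℝ (LinearMap.ker (1 - Q * P).mulVecLin) :=
    le_antisymm (key P Q) (key Q P)
  unfold Matrix.rank
  omega

theorem nabla_displacement_rank_inverse (n : ℕ) (A Z N : Matrix (Fin n) (Fin n) ℝ)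
    (hA : IsUnit A.det) :
    (A - Z * A * N).rank = (A⁻¹ - N * A⁻¹ * Z).rank := by
  have hinv : IsUnit A⁻¹.det := A.isUnit_nonsing_inv_det hA
  have hAA : A * A⁻¹ = 1 := mul_nonsing_inv A hA
  have e1 : A - Z * A * N = A * (1 - A⁻¹ * Z * A * N) := by
    rw [mul_sub, mul_one, ← mul_assoc, ← mul_assoc, ← mul_assoc, hAA, one_mul]
  have e2 : A⁻¹ - N * A⁻¹ * Z = (1 - N * (A⁻¹ * Z * A)) * A⁻¹ := by
    rw [sub_mul, one_mul, mul_assoc, mul_assoc, mul_assoc, hAA, mul_one, ← mul_assoc]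
  rw [e1, e2, rank_mul_eq_right_of_isUnit_det A _ hA,
    rank_mul_eq_left_of_isUnit_det A⁻¹ _ hinv]
  have := rank_one_sub_mul_comm n (A⁻¹ * Z * A) N
  rw [← mul_assoc] at this ⊢
  exact this
end

section
/- Let V and W be finite-dimensional vector spaces over a field K, let f : V → W and g : W → V be linear maps, and let λ be a nonzero scalar in K. Then the λ-eigenspace of the composition f∘g : W → W and the λ-eigenspace of the composition g∘f : V → V have the same dimension. In particular, every nonzero eigenvalue of f∘g is also an eigenvalue of g∘f. -/
theorem eigenspace_comp_le_aux {K : Type*} [Field K]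
    {V W : Type*} [AddCommGroup V] [Module K V] [AddCommGroup W] [Module K W]
    [FiniteDimensional K V] [FiniteDimensional K W]
    (f : V →ₗ[K] W) (g : W →ₗ[K] V) (lam : K) (hlam : lam ≠ 0) :
    Module.finrank K (Module.End.eigenspace (f ∘ₗ g) lam) ≤
      Module.finrank K (Module.End.eigenspace (g ∘ₗ f) lam) := by
  let T : Module.End.eigenspace (f ∘ₗ g) lam →ₗ[K] Module.End.eigenspace (g ∘ₗ f) lam :=
    { toFun := fun x => ⟨g x, by
        have hx := Module.End.mem_eigenspace_iff.mp x.2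
        rw [Module.End.mem_eigenspace_iff]
        simp only [LinearMap.comp_apply] at hx ⊢
        rw [hx]; simp⟩
      map_add' := fun x y => by ext; simp
      map_smul' := fun c x => by ext; simp }
  have hT : Function.Injective T := by
    intro x y hxy
    have h : g x.1 = g y.1 := congrArg Subtype.val hxy
    have hx := Module.End.mem_eigenspace_iff.mp x.2
    have hy := Module.End.mem_eigenspace_iff.mp y.2
    simp only [LinearMap.comp_apply] at hx hy
    have hlw : lam • (x : W) = lam • (y : W) := by rw [← hx, ← hy, h]
    exact Subtype.ext (smul_right_injective W hlam hlw)
  exact LinearMap.finrank_le_finrank_of_injective hT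

theorem eigenspace_comp_dim_eq {K : Type*} [Field K]
    {V W : Type*} [AddCommGroup V] [Module K V] [AddCommGroup W] [Module K W]
    [FiniteDimensional K V] [FiniteDimensional K W]
    (f : V →ₗ[K] W) (g : W →ₗ[K] V) (lam : K) (hlam : lam ≠ 0) :
    Module.finrank K (Module.End.eigenspace (f ∘ₗ g) lam) =
      Module.finrank K (Module.End.eigenspace (g ∘ₗ f) lam) ∧
    (Module.End.HasEigenvalue (f ∘ₗ g) lam → Module.End.HasEigenvalue (g ∘ₗ f) lam) := by
  have heq : Module.finrank K (Module.End.eigenspace (f ∘ₗ g) lam) =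
      Module.finrank K (Module.End.eigenspace (g ∘ₗ f) lam) :=
    le_antisymm (eigenspace_comp_le_aux f g lam hlam) (eigenspace_comp_le_aux g f lam hlam)
  refine ⟨heq, fun h => ?_⟩
  rw [Module.End.hasEigenvalue_iff] at h ⊢
  intro hbot
  exact h (Submodule.finrank_eq_zero.mp (heq.trans (by rw [hbot]; simp)))
end

section
/- Let A, Z, N be n×n real matrices and let η be a real number such that A + ηI is invertible, where I is the n×n identity. Set R = (A + ηI)⁻¹ (the regularized inverse). Then rank(R − N·R·Z) ≤ rank(A − Z·A·N) + rank(I − Z·N). That is, δ^∇_{N,Z}{R} ≤ δ^∇_{Z,N}{A} + δ^∇_{Z,N}{I}. -/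
open Matrix LinearMap

private lemma matRank_add_le {n : ℕ} (M M' : Matrix (Fin n) (Fin n) ℝ) :
    (M + M').rank ≤ M.rank + M'.rank := by
  rw [Matrix.rank, Matrix.rank, Matrix.rank, Matrix.mulVecLin_add]
  refine le_trans (Submodule.finrank_mono ?_)
    (Submodule.finrank_add_le_finrank_add_finrank _ _)
  rintro x ⟨v, rfl⟩
  exact Submodule.mem_sup.2 ⟨_, ⟨v, rfl⟩, _, ⟨v, rfl⟩, rfl⟩

private lemma ker_one_sub_mul_le {n : ℕ} (X Y : Matrix (Fin n) (Fin n) ℝ) :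
    Module.finrank ℝ (ker ((1 : Matrix (Fin n) (Fin n) ℝ) - Y * X).mulVecLin)
      ≤ Module.finrank ℝ (ker ((1 : Matrix (Fin n) (Fin n) ℝ) - X * Y).mulVecLin) := by
  have hmem : ∀ v ∈ ker ((1 : Matrix (Fin n) (Fin n) ℝ) - Y * X).mulVecLin,
      X.mulVecLin v ∈ ker ((1 : Matrix (Fin n) (Fin n) ℝ) - X * Y).mulVecLin := by
    intro v hv
    simp only [mem_ker, Matrix.mulVecLin_apply, Matrix.sub_mulVec, Matrix.one_mulVec,
      ← Matrix.mulVec_mulVec, sub_eq_zero] at hv ⊢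
    rw [← hv]
  let f : ker ((1 : Matrix (Fin n) (Fin n) ℝ) - Y * X).mulVecLin →ₗ[ℝ]
      ker ((1 : Matrix (Fin n) (Fin n) ℝ) - X * Y).mulVecLin :=
    LinearMap.codRestrict _ (X.mulVecLin ∘ₗ Submodule.subtype _) (fun v => hmem v.1 v.2)
  refine LinearMap.finrank_le_finrank_of_injective (f := f) ?_
  intro v w hvw
  have hv := v.2
  have hw := w.2
  simp only [mem_ker, Matrix.mulVecLin_apply, Matrix.sub_mulVec, Matrix.one_mulVec,
    ← Matrix.mulVec_mulVec, sub_eq_zero] at hv hw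
  have h1 : X.mulVecLin v.1 = X.mulVecLin w.1 := congrArg Subtype.val hvw
  simp only [Matrix.mulVecLin_apply] at h1
  ext1
  rw [hv, hw, h1]

private lemma rank_one_sub_mul_le {n : ℕ} (X Y : Matrix (Fin n) (Fin n) ℝ) :
    ((1 : Matrix (Fin n) (Fin n) ℝ) - X * Y).rank ≤ (1 - Y * X).rank := by
  have h1 := LinearMap.finrank_range_add_finrank_ker
    ((1 : Matrix (Fin n) (Fin n) ℝ) - X * Y).mulVecLin
  have h2 := LinearMap.finrank_range_add_finrank_ker
    ((1 : Matrix (Fin n) (Fin n) ℝ) - Y * X).mulVecLin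
  have h3 := ker_one_sub_mul_le X Y
  rw [Matrix.rank, Matrix.rank]
  omega

theorem regularized_inverse_displacement (n : ℕ) (A Z N : Matrix (Fin n) (Fin n) ℝ) (eta : ℝ)
    (h : IsUnit (A + eta • (1 : Matrix (Fin n) (Fin n) ℝ)).det) :
    ((A + eta • (1 : Matrix (Fin n) (Fin n) ℝ))⁻¹
        - N * (A + eta • (1 : Matrix (Fin n) (Fin n) ℝ))⁻¹ * Z).rank
      ≤ (A - Z * A * N).rank + ((1 : Matrix (Fin n) (Fin n) ℝ) - Z * N).rank := by
  set B := A + eta • (1 : Matrix (Fin n) (Fin n) ℝ) with hBdef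
  have hBi : B * B⁻¹ = 1 := Matrix.mul_nonsing_inv B h
  have hiB : B⁻¹ * B = 1 := Matrix.nonsing_inv_mul B h
  set X := B⁻¹ * Z * B with hX
  have key1 : B⁻¹ - N * B⁻¹ * Z = (1 - N * X) * B⁻¹ := by
    rw [sub_mul, one_mul, hX]
    congr 1
    symm
    calc N * (B⁻¹ * Z * B) * B⁻¹ = N * B⁻¹ * Z * (B * B⁻¹) := by
          simp only [Matrix.mul_assoc]
      _ = N * B⁻¹ * Z := by rw [hBi, Matrix.mul_one]
  have key2 : 1 - X * N = B⁻¹ * (B - Z * B * N) := by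
    rw [Matrix.mul_sub, hiB, hX]
    simp only [Matrix.mul_assoc]
  have step1 : (B⁻¹ - N * B⁻¹ * Z).rank ≤ (1 - N * X).rank := by
    rw [key1]; exact Matrix.rank_mul_le_left _ _
  have step2 : ((1 : Matrix (Fin n) (Fin n) ℝ) - N * X).rank ≤ (1 - X * N).rank :=
    rank_one_sub_mul_le N X
  have step3 : ((1 : Matrix (Fin n) (Fin n) ℝ) - X * N).rank ≤ (B - Z * B * N).rank := by
    rw [key2]; exact Matrix.rank_mul_le_right _ _
  have hsplit : B - Z * B * N = (A - Z * A * N) + eta • (1 - Z * N) := by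
    rw [hBdef]
    simp only [Matrix.mul_add, Matrix.add_mul, Matrix.mul_smul, Matrix.smul_mul,
      Matrix.mul_one, Matrix.one_mul, smul_sub]
    abel
  have step4 : (B - Z * B * N).rank
      ≤ (A - Z * A * N).rank + ((1 : Matrix (Fin n) (Fin n) ℝ) - Z * N).rank := by
    have hsmul : (eta • ((1 : Matrix (Fin n) (Fin n) ℝ) - Z * N)).rank
        ≤ ((1 : Matrix (Fin n) (Fin n) ℝ) - Z * N).rank := by
      have he : eta • ((1 : Matrix (Fin n) (Fin n) ℝ) - Z * N)
          = (eta • (1 : Matrix (Fin n) (Fin n) ℝ)) * (1 - Z * N) := by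
        rw [Matrix.smul_mul, Matrix.one_mul]
      rw [he]
      exact Matrix.rank_mul_le_right _ _
    rw [hsplit]
    exact (matRank_add_le _ _).trans (add_le_add (le_refl _) hsmul)
  exact ((step1.trans step2).trans step3).trans step4
end

section
/- Let M be the 2×2 block real matrix M = [[A, B], [C, D]], where A is n₁×n₁, D is n₂×n₂, B is n₁×n₂ and C is n₂×n₁. Assume both M and A are invertible, and let Ā = D − C·A⁻¹·B be the Schur complement of A in M. Let Z₁, N₁ be n₁×n₁ real matrices and Z₂, N₂ be n₂×n₂ real matrices, and set Z = Z₁ ⊕ Z₂ and N = N₁ ⊕ N₂ (block-diagonal matrices). Then rank(Ā − Z₂·Ā·N₂) ≤ rank(M − Z·M·N), i.e. δ^∇_{Z₂,N₂}{Ā} ≤ δ^∇_{Z,N}{M}. -/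
open Matrix

/-- If `x` is fixed by `U*V` then `V.mulVec x` is fixed by `V*U`, injectively; hence the
nullity of `1 - U*V` is at most that of `1 - V*U`, so ranks compare the other way. -/
lemma rank_one_sub_mul_le_s6 {m : Type*} [Fintype m] [DecidableEq m]
    (U V : Matrix m m ℝ) : (1 - V * U).rank ≤ (1 - U * V).rank := by
  classical
  have hker : ∀ x ∈ LinearMap.ker (1 - U * V).mulVecLin,
      V.mulVec x ∈ LinearMap.ker (1 - V * U).mulVecLin := by
    intro x hx
    simp only [LinearMap.mem_ker, mulVecLin_apply, sub_mulVec, one_mulVec,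
      ← mulVec_mulVec, sub_eq_zero] at hx ⊢
    conv_lhs => rw [hx]
  set f : LinearMap.ker (1 - U * V).mulVecLin →ₗ[ℝ] LinearMap.ker (1 - V * U).mulVecLin :=
    V.mulVecLin.restrict hker with hf
  have hinj : Function.Injective f := by
    rintro ⟨x, hx⟩ ⟨y, hy⟩ hxy
    simp only [LinearMap.mem_ker, mulVecLin_apply, sub_mulVec, one_mulVec,
      ← mulVec_mulVec, sub_eq_zero] at hx hy
    have hVxy : V.mulVec x = V.mulVec y := congrArg Subtype.val hxy
    exact Subtype.ext (show x = y by rw [hx, hVxy, ← hy])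
  have hdim : Module.finrank ℝ (LinearMap.ker (1 - U * V).mulVecLin)
      ≤ Module.finrank ℝ (LinearMap.ker (1 - V * U).mulVecLin) :=
    LinearMap.finrank_le_finrank_of_injective hinj
  have h1 := LinearMap.finrank_range_add_finrank_ker (1 - U * V).mulVecLin
  have h2 := LinearMap.finrank_range_add_finrank_ker (1 - V * U).mulVecLin
  rw [Module.finrank_pi] at h1 h2
  have e1 : (1 - U * V).rank = Module.finrank ℝ (LinearMap.range (1 - U * V).mulVecLin) := rfl
  have e2 : (1 - V * U).rank = Module.finrank ℝ (LinearMap.range (1 - V * U).mulVecLin) := rfl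
  omega

lemma rank_one_sub_mul_comm_s6 {m : Type*} [Fintype m] [DecidableEq m]
    (U V : Matrix m m ℝ) : (1 - U * V).rank = (1 - V * U).rank :=
  le_antisymm (rank_one_sub_mul_le_s6 V U) (rank_one_sub_mul_le_s6 U V)

/-- The rank of the lower-right block of a matrix is at most the rank of the matrix. -/
lemma rank_submatrix_inr_inr_le {m n : Type*} [Fintype m] [Fintype n]
    [DecidableEq m] [DecidableEq n] (W : Matrix (m ⊕ n) (m ⊕ n) ℝ) :
    (W.submatrix Sum.inr Sum.inr).rank ≤ W.rank := by
  have hP : ((1 : Matrix (m ⊕ n) (m ⊕ n) ℝ).submatrix Sum.inr ⇑(Equiv.refl (m ⊕ n))) * W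
      = W.submatrix Sum.inr id := by
    rw [Matrix.one_submatrix_mul]
    rfl
  have hQ : (W.submatrix Sum.inr id)
        * ((1 : Matrix (m ⊕ n) (m ⊕ n) ℝ).submatrix ⇑(Equiv.refl (m ⊕ n)) Sum.inr)
      = W.submatrix Sum.inr Sum.inr := by
    rw [Matrix.mul_submatrix_one]
    rfl
  calc (W.submatrix Sum.inr Sum.inr).rank
      = ((W.submatrix Sum.inr id)
          * ((1 : Matrix (m ⊕ n) (m ⊕ n) ℝ).submatrix ⇑(Equiv.refl (m ⊕ n)) Sum.inr)).rank := by
        rw [hQ]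
    _ ≤ (W.submatrix Sum.inr id).rank := Matrix.rank_mul_le_left _ _
    _ = (((1 : Matrix (m ⊕ n) (m ⊕ n) ℝ).submatrix Sum.inr ⇑(Equiv.refl (m ⊕ n))) * W).rank := by
        rw [hP]
    _ ≤ W.rank := Matrix.rank_mul_le_right _ _

theorem schur_complement_nabla_displacement (n₁ n₂ : ℕ)
    (A : Matrix (Fin n₁) (Fin n₁) ℝ) (B : Matrix (Fin n₁) (Fin n₂) ℝ)
    (C : Matrix (Fin n₂) (Fin n₁) ℝ) (D : Matrix (Fin n₂) (Fin n₂) ℝ)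
    (Z₁ N₁ : Matrix (Fin n₁) (Fin n₁) ℝ) (Z₂ N₂ : Matrix (Fin n₂) (Fin n₂) ℝ)
    (hM : IsUnit (Matrix.fromBlocks A B C D).det) (hA : IsUnit A.det) :
    ((D - C * A⁻¹ * B) - Z₂ * (D - C * A⁻¹ * B) * N₂).rank
      ≤ (Matrix.fromBlocks A B C D
          - Matrix.fromBlocks Z₁ 0 0 Z₂ * Matrix.fromBlocks A B C D
              * Matrix.fromBlocks N₁ 0 0 N₂).rank := by
  classical
  haveI : Invertible A := A.invertibleOfIsUnitDet hA
  have hinvA : ⅟A = A⁻¹ := invOf_eq_nonsing_inv A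
  -- the Schur complement is invertible
  have hdetM : (Matrix.fromBlocks A B C D).det = A.det * (D - C * A⁻¹ * B).det := by
    rw [Matrix.det_fromBlocks₁₁, hinvA]
  have hS : IsUnit (D - C * A⁻¹ * B).det := by
    rw [hdetM] at hM
    exact isUnit_of_mul_isUnit_right hM
  haveI : Invertible (D - C * A⁻¹ * B) := (D - C * A⁻¹ * B).invertibleOfIsUnitDet hS
  haveI instDCAB : Invertible (D - C * ⅟A * B) := by
    rw [hinvA]; exact (D - C * A⁻¹ * B).invertibleOfIsUnitDet hS
  haveI : Invertible (Matrix.fromBlocks A B C D) :=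
    (Matrix.fromBlocks A B C D).invertibleOfIsUnitDet hM
  have hX : ⅟(D - C * ⅟A * B) = (D - C * A⁻¹ * B)⁻¹ := by
    rw [invOf_eq_nonsing_inv, hinvA]
  -- the inverse of M as a block matrix
  have hMinv : (Matrix.fromBlocks A B C D)⁻¹ = Matrix.fromBlocks
      (A⁻¹ + A⁻¹ * B * (D - C * A⁻¹ * B)⁻¹ * C * A⁻¹)
      (-(A⁻¹ * B * (D - C * A⁻¹ * B)⁻¹))
      (-((D - C * A⁻¹ * B)⁻¹ * C * A⁻¹)) ((D - C * A⁻¹ * B)⁻¹) := by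
    rw [← invOf_eq_nonsing_inv, Matrix.invOf_fromBlocks₁₁_eq, hX, hinvA]
  have hdetMinv : IsUnit ((Matrix.fromBlocks A B C D)⁻¹).det :=
    (Matrix.fromBlocks A B C D).isUnit_nonsing_inv_det hM
  have hdetSinv : IsUnit ((D - C * A⁻¹ * B)⁻¹).det :=
    (D - C * A⁻¹ * B).isUnit_nonsing_inv_det hS
  -- the lower-right block of the displaced inverse
  have hblock : ((Matrix.fromBlocks A B C D)⁻¹
        - Matrix.fromBlocks N₁ 0 0 N₂ * (Matrix.fromBlocks A B C D)⁻¹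
            * Matrix.fromBlocks Z₁ 0 0 Z₂).submatrix Sum.inr Sum.inr
      = (D - C * A⁻¹ * B)⁻¹ - N₂ * (D - C * A⁻¹ * B)⁻¹ * Z₂ := by
    rw [hMinv]
    ext i j
    simp [Matrix.fromBlocks_multiply, Matrix.sub_apply, Matrix.submatrix_apply]
  calc ((D - C * A⁻¹ * B) - Z₂ * (D - C * A⁻¹ * B) * N₂).rank
      = ((D - C * A⁻¹ * B)⁻¹ * ((D - C * A⁻¹ * B) - Z₂ * (D - C * A⁻¹ * B) * N₂)).rank :=
        (rank_mul_eq_right_of_isUnit_det (D - C * A⁻¹ * B)⁻¹ _ hdetSinv).symm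
    _ = (1 - ((D - C * A⁻¹ * B)⁻¹ * Z₂ * (D - C * A⁻¹ * B)) * N₂).rank := by
        rw [Matrix.mul_sub, Matrix.nonsing_inv_mul _ hS]
        simp only [Matrix.mul_assoc]
    _ = (1 - N₂ * ((D - C * A⁻¹ * B)⁻¹ * Z₂ * (D - C * A⁻¹ * B))).rank :=
        rank_one_sub_mul_comm_s6 _ _
    _ = (((D - C * A⁻¹ * B)⁻¹ - N₂ * (D - C * A⁻¹ * B)⁻¹ * Z₂) * (D - C * A⁻¹ * B)).rank := by
        rw [Matrix.sub_mul, Matrix.nonsing_inv_mul _ hS]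
        simp only [Matrix.mul_assoc]
    _ = ((D - C * A⁻¹ * B)⁻¹ - N₂ * (D - C * A⁻¹ * B)⁻¹ * Z₂).rank :=
        rank_mul_eq_left_of_isUnit_det (D - C * A⁻¹ * B) _ hS
    _ ≤ ((Matrix.fromBlocks A B C D)⁻¹
          - Matrix.fromBlocks N₁ 0 0 N₂ * (Matrix.fromBlocks A B C D)⁻¹
              * Matrix.fromBlocks Z₁ 0 0 Z₂).rank := by
        rw [← hblock]
        exact rank_submatrix_inr_inr_le _
    _ = (((Matrix.fromBlocks A B C D)⁻¹
          - Matrix.fromBlocks N₁ 0 0 N₂ * (Matrix.fromBlocks A B C D)⁻¹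
              * Matrix.fromBlocks Z₁ 0 0 Z₂) * Matrix.fromBlocks A B C D).rank :=
        (rank_mul_eq_left_of_isUnit_det (Matrix.fromBlocks A B C D) _ hM).symm
    _ = (1 - Matrix.fromBlocks N₁ 0 0 N₂ * ((Matrix.fromBlocks A B C D)⁻¹
            * Matrix.fromBlocks Z₁ 0 0 Z₂ * Matrix.fromBlocks A B C D)).rank := by
        rw [Matrix.sub_mul, Matrix.nonsing_inv_mul _ hM]
        simp only [Matrix.mul_assoc]
    _ = (1 - ((Matrix.fromBlocks A B C D)⁻¹
            * Matrix.fromBlocks Z₁ 0 0 Z₂ * Matrix.fromBlocks A B C D)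
            * Matrix.fromBlocks N₁ 0 0 N₂).rank :=
        (rank_one_sub_mul_comm_s6 _ _).symm
    _ = ((Matrix.fromBlocks A B C D)⁻¹ * (Matrix.fromBlocks A B C D
          - Matrix.fromBlocks Z₁ 0 0 Z₂ * Matrix.fromBlocks A B C D
              * Matrix.fromBlocks N₁ 0 0 N₂)).rank := by
        rw [Matrix.mul_sub, Matrix.nonsing_inv_mul _ hM]
        simp only [Matrix.mul_assoc]
    _ = (Matrix.fromBlocks A B C D
          - Matrix.fromBlocks Z₁ 0 0 Z₂ * Matrix.fromBlocks A B C D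
              * Matrix.fromBlocks N₁ 0 0 N₂).rank :=
        rank_mul_eq_right_of_isUnit_det (Matrix.fromBlocks A B C D)⁻¹ _ hdetMinv
end

section
/- Let M be the 2×2 block real matrix M = [[A, B], [C, D]], where A is n₁×n₁, D is n₂×n₂, B is n₁×n₂ and C is n₂×n₁. Assume both M and A are invertible, and let Ā = D − C·A⁻¹·B be the Schur complement of A in M. Let Z₁, N₁ be n₁×n₁ real matrices and Z₂, N₂ be n₂×n₂ real matrices, and set Z = Z₁ ⊕ Z₂ and N = N₁ ⊕ N₂ (block-diagonal matrices). Then rank(Z₂·Ā − Ā·N₂) ≤ rank(Z·M − M·N), i.e. δ^Δ_{Z₂,N₂}{Ā} ≤ δ^Δ_{Z,N}{M}. -/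
open Matrix

theorem schur_complement_delta_displacement (n₁ n₂ : ℕ)
    (A : Matrix (Fin n₁) (Fin n₁) ℝ) (B : Matrix (Fin n₁) (Fin n₂) ℝ)
    (C : Matrix (Fin n₂) (Fin n₁) ℝ) (D : Matrix (Fin n₂) (Fin n₂) ℝ)
    (Z₁ N₁ : Matrix (Fin n₁) (Fin n₁) ℝ) (Z₂ N₂ : Matrix (Fin n₂) (Fin n₂) ℝ)
    (hM : IsUnit (Matrix.fromBlocks A B C D).det) (hA : IsUnit A.det) :
    (Z₂ * (D - C * A⁻¹ * B) - (D - C * A⁻¹ * B) * N₂).rank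
      ≤ (Matrix.fromBlocks Z₁ 0 0 Z₂ * Matrix.fromBlocks A B C D
          - Matrix.fromBlocks A B C D * Matrix.fromBlocks N₁ 0 0 N₂).rank := by
  have h1 : A * A⁻¹ = 1 := Matrix.mul_nonsing_inv A hA
  have h2 : A⁻¹ * A = 1 := Matrix.nonsing_inv_mul A hA
  set S : Matrix (Fin n₂) (Fin n₂) ℝ := D - C * A⁻¹ * B with hS
  set M : Matrix (Fin n₁ ⊕ Fin n₂) (Fin n₁ ⊕ Fin n₂) ℝ := Matrix.fromBlocks A B C D with hMdef
  set X : Matrix (Fin n₂) (Fin n₁ ⊕ Fin n₂) ℝ := Matrix.fromCols (-(C * A⁻¹)) 1 with hX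
  set Y : Matrix (Fin n₁ ⊕ Fin n₂) (Fin n₂) ℝ := Matrix.fromRows (-(A⁻¹ * B)) 1 with hY
  set W : Matrix (Fin n₁ ⊕ Fin n₂) (Fin n₁ ⊕ Fin n₂) ℝ :=
    Matrix.fromBlocks Z₁ 0 0 Z₂ * M - M * Matrix.fromBlocks N₁ 0 0 N₂ with hW
  have e1 : A * -(A⁻¹ * B) + B * (1 : Matrix (Fin n₂) (Fin n₂) ℝ) = 0 := by
    rw [Matrix.mul_neg, ← Matrix.mul_assoc, h1, Matrix.one_mul, Matrix.mul_one, neg_add_cancel]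
  have e2 : C * -(A⁻¹ * B) + D * (1 : Matrix (Fin n₂) (Fin n₂) ℝ) = S := by
    rw [Matrix.mul_neg, ← Matrix.mul_assoc, Matrix.mul_one, neg_add_eq_sub, hS]
  have hMY : M * Y = Matrix.fromRows 0 S := by
    rw [hMdef, hY, Matrix.fromBlocks_mul_fromRows, e1, e2]
  have e3 : -(C * A⁻¹) * A + (1 : Matrix (Fin n₂) (Fin n₂) ℝ) * C = 0 := by
    rw [Matrix.neg_mul, Matrix.mul_assoc, h2, Matrix.mul_one, Matrix.one_mul, neg_add_cancel]
  have e4 : -(C * A⁻¹) * B + (1 : Matrix (Fin n₂) (Fin n₂) ℝ) * D = S := by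
    rw [Matrix.neg_mul, Matrix.one_mul, neg_add_eq_sub, hS]
  have hXM : X * M = Matrix.fromCols 0 S := by
    rw [hMdef, hX, Matrix.fromCols_mul_fromBlocks, e3, e4]
  have t1 : X * (Matrix.fromBlocks Z₁ 0 0 Z₂ * (M * Y)) = Z₂ * S := by
    rw [hMY, Matrix.fromBlocks_mul_fromRows, hX, Matrix.fromCols_mul_fromRows]
    simp
  have t2 : X * (M * (Matrix.fromBlocks N₁ 0 0 N₂ * Y)) = S * N₂ := by
    rw [← Matrix.mul_assoc X M, hXM, ← Matrix.mul_assoc, Matrix.fromCols_mul_fromBlocks, hY,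
      Matrix.fromCols_mul_fromRows]
    simp
  have key : X * (W * Y) = Z₂ * S - S * N₂ := by
    rw [hW]
    simp only [Matrix.sub_mul, Matrix.mul_sub, Matrix.mul_assoc]
    rw [t1, t2]
  calc (Z₂ * S - S * N₂).rank = (X * (W * Y)).rank := by rw [key]
    _ ≤ (W * Y).rank := Matrix.rank_mul_le_right X (W * Y)
    _ ≤ W.rank := Matrix.rank_mul_le_left W Y
end

section
/- Let A be a real m×n matrix and B a real n×p matrix, and let Z_A be m×m, N_A and Z_B be n×n, and N_B be p×p real matrices. Then rank(Z_A·A·B − A·B·N_B) ≤ rank(Z_A·A − A·N_A) + rank(N_A − Z_B) + rank(Z_B·B − B·N_B). In displacement notation: δ^Δ_{Z_A,N_B}{AB} ≤ δ^Δ_{Z_A,N_A}{A} + δ^Δ_{N_A,Z_B}{I_n} + δ^Δ_{Z_B,N_B}{B}. -/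
open Matrix

lemma matrix_rank_add_le_s9 {a b : ℕ} (X Y : Matrix (Fin a) (Fin b) ℝ) :
    (X + Y).rank ≤ X.rank + Y.rank := by
  unfold Matrix.rank
  have h : LinearMap.range (X + Y).mulVecLin ≤
      LinearMap.range X.mulVecLin ⊔ LinearMap.range Y.mulVecLin := by
    rintro _ ⟨v, rfl⟩
    exact Submodule.mem_sup.mpr ⟨X.mulVecLin v, ⟨v, rfl⟩, Y.mulVecLin v, ⟨v, rfl⟩, by
      simp [Matrix.add_mulVec]⟩
  exact le_trans (Submodule.finrank_mono h)
    (Submodule.finrank_add_le_finrank_add_finrank _ _)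

theorem product_delta_displacement (m n p : ℕ)
    (A : Matrix (Fin m) (Fin n) ℝ) (B : Matrix (Fin n) (Fin p) ℝ)
    (ZA : Matrix (Fin m) (Fin m) ℝ) (NA ZB : Matrix (Fin n) (Fin n) ℝ)
    (NB : Matrix (Fin p) (Fin p) ℝ) :
    (ZA * (A * B) - (A * B) * NB).rank
      ≤ (ZA * A - A * NA).rank + (NA - ZB).rank + (ZB * B - B * NB).rank := by
  have key : ZA * (A * B) - (A * B) * NB
      = (ZA * A - A * NA) * B + (A * (NA - ZB) * B + A * (ZB * B - B * NB)) := by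
    simp only [Matrix.sub_mul, Matrix.mul_sub, Matrix.mul_assoc]; abel
  rw [key]
  calc ((ZA * A - A * NA) * B + (A * (NA - ZB) * B + A * (ZB * B - B * NB))).rank
      ≤ ((ZA * A - A * NA) * B).rank + (A * (NA - ZB) * B + A * (ZB * B - B * NB)).rank :=
        matrix_rank_add_le_s9 _ _
    _ ≤ ((ZA * A - A * NA) * B).rank + ((A * (NA - ZB) * B).rank + (A * (ZB * B - B * NB)).rank) :=
        by gcongr; exact matrix_rank_add_le_s9 _ _
    _ ≤ (ZA * A - A * NA).rank + ((NA - ZB).rank + (ZB * B - B * NB).rank) := by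
        gcongr
        · exact rank_mul_le_left _ _
        · exact le_trans (rank_mul_le_left _ _) (rank_mul_le_right _ _)
        · exact rank_mul_le_right _ _
    _ = (ZA * A - A * NA).rank + (NA - ZB).rank + (ZB * B - B * NB).rank := by ring
end

section
/- Let T₁ be a real n₁×n₂ Töplitz matrix and T₂ a real n₂×n₁ Töplitz matrix with n₁ ≤ n₂, both of full rank (rank T₁ = rank T₂ = n₁). Let S be the n₁×n₁ lower shift matrix. Then rank(T₁·T₂ − S·(T₁·T₂)·Sᵀ) ≤ 4, i.e. the Töplitz product T₁T₂ satisfies δ^∇_{S,Sᵀ}{T₁T₂} ≤ 4. -/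
open Matrix

/-- A real matrix is Töplitz if its entries depend only on the difference of indices. -/
def IsToeplitz {m n : ℕ} (T : Matrix (Fin m) (Fin n) ℝ) : Prop :=
  ∃ f : ℤ → ℝ, ∀ i j, T i j = f ((i : ℤ) - (j : ℤ))

/-- The lower shift matrix: ones on the first subdiagonal, zeros elsewhere. -/
def lowerShift (n : ℕ) : Matrix (Fin n) (Fin n) ℝ :=
  Matrix.of fun i j => if (i : ℕ) = (j : ℕ) + 1 then 1 else 0

lemma myRankAddLe {m n : ℕ} (A B : Matrix (Fin m) (Fin n) ℝ) :
    (A + B).rank ≤ A.rank + B.rank := by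
  rw [Matrix.rank, Matrix.rank, Matrix.rank, Matrix.mulVecLin_add]
  refine le_trans (Submodule.finrank_mono ?_)
    (Submodule.finrank_add_le_finrank_add_finrank _ _)
  rintro x ⟨y, rfl⟩
  exact Submodule.mem_sup.2 ⟨A.mulVecLin y, ⟨y, rfl⟩, B.mulVecLin y, ⟨y, rfl⟩, rfl⟩

lemma myRankVecMulVecLe {m n : ℕ} (u : Fin m → ℝ) (v : Fin n → ℝ) :
    (vecMulVec u v).rank ≤ 1 := by
  rw [vecMulVec_eq Unit]
  refine (Matrix.rank_mul_le_left _ _).trans ?_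
  simpa using Matrix.rank_le_card_width (Matrix.replicateCol Unit u)

/-- A matrix supported on one row and one column has rank at most 2. -/
lemma myRankLeTwo {m n : ℕ} (M : Matrix (Fin m) (Fin n) ℝ)
    (i₀ : Fin m) (j₀ : Fin n) (h : ∀ i j, i ≠ i₀ → j ≠ j₀ → M i j = 0) :
    M.rank ≤ 2 := by
  have hM : M = vecMulVec (Pi.single i₀ 1) (M i₀) +
      vecMulVec (fun i => if i = i₀ then 0 else M i j₀) (Pi.single j₀ 1) := by
    ext i j
    by_cases hi : i = i₀ <;> by_cases hj : j = j₀ <;>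
      simp [vecMulVec, hi, hj, Pi.single_apply, h i j]
  rw [hM]
  calc (vecMulVec (Pi.single i₀ (1:ℝ)) (M i₀) +
      vecMulVec (fun i => if i = i₀ then 0 else M i j₀) (Pi.single j₀ 1)).rank
      ≤ _ + _ := myRankAddLe _ _
    _ ≤ 1 + 1 := add_le_add (myRankVecMulVecLe _ _) (myRankVecMulVecLe _ _)

/-- Right multiplication by the transpose of the lower shift. -/
lemma myMulShiftT {m n : ℕ} (M : Matrix (Fin m) (Fin n) ℝ) (i : Fin m)
    (j j' : Fin n) (hj : (j : ℕ) = (j' : ℕ) + 1) :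
    (M * (lowerShift n)ᵀ) i j = M i j' := by
  rw [Matrix.mul_apply, Finset.sum_eq_single j']
  · simp [lowerShift, hj]
  · intro b _ hb
    simp only [transpose_apply, lowerShift, of_apply]
    rw [if_neg, mul_zero]
    intro hcon
    exact hb (Fin.ext (by omega))
  · simp

/-- Left multiplication by the lower shift. -/
lemma myShiftMul {m n : ℕ} (M : Matrix (Fin m) (Fin n) ℝ) (j : Fin n)
    (i i' : Fin m) (hi : (i : ℕ) = (i' : ℕ) + 1) :
    (lowerShift m * M) i j = M i' j := by
  rw [Matrix.mul_apply, Finset.sum_eq_single i']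
  · simp [lowerShift, hi]
  · intro a _ ha
    simp only [lowerShift, of_apply]
    rw [if_neg, zero_mul]
    intro hcon
    exact ha (Fin.ext (by omega))
  · simp

/-- Left multiplication by the transpose of the lower shift. -/
lemma myShiftTMul {m n : ℕ} (M : Matrix (Fin m) (Fin n) ℝ) (j : Fin n)
    (i i' : Fin m) (hi : (i' : ℕ) = (i : ℕ) + 1) :
    ((lowerShift m)ᵀ * M) i j = M i' j := by
  rw [Matrix.mul_apply, Finset.sum_eq_single i']
  · simp [lowerShift, hi]
  · intro a _ ha
    simp only [transpose_apply, lowerShift, of_apply]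
    rw [if_neg, zero_mul]
    intro hcon
    exact ha (Fin.ext (by omega))
  · simp

theorem toeplitz_product_nabla_displacement (n₁ n₂ : ℕ) (hn : n₁ ≤ n₂)
    (T₁ : Matrix (Fin n₁) (Fin n₂) ℝ) (T₂ : Matrix (Fin n₂) (Fin n₁) ℝ)
    (hT₁ : IsToeplitz T₁) (hT₂ : IsToeplitz T₂)
    (hr₁ : T₁.rank = n₁) (hr₂ : T₂.rank = n₁) :
    (T₁ * T₂ - lowerShift n₁ * (T₁ * T₂) * (lowerShift n₁)ᵀ).rank ≤ 4 := by
  rcases Nat.eq_zero_or_pos n₁ with h0 | h1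
  · subst h0
    refine le_trans (Matrix.rank_le_card_width _) (by simp)
  have hn2 : 0 < n₂ := lt_of_lt_of_le h1 hn
  obtain ⟨f, hf⟩ := hT₁
  obtain ⟨g, hg⟩ := hT₂
  set S := lowerShift n₁
  set Z := lowerShift n₂
  set A : Matrix (Fin n₁) (Fin n₂) ℝ := T₁ - S * T₁ * Zᵀ with hA
  set B : Matrix (Fin n₂) (Fin n₁) ℝ := Zᵀ * T₂ - T₂ * Sᵀ with hB
  have key : T₁ * T₂ - S * (T₁ * T₂) * Sᵀ = A * T₂ + (S * T₁) * B := by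
    rw [hA, hB]
    simp only [Matrix.sub_mul, Matrix.mul_sub, Matrix.mul_assoc]
    abel
  rw [key]
  have hAr : A.rank ≤ 2 := by
    refine myRankLeTwo A ⟨0, h1⟩ ⟨0, hn2⟩ ?_
    intro i j hi hj
    have hi' : (i : ℕ) ≠ 0 := fun hc => hi (Fin.ext hc)
    have hj' : (j : ℕ) ≠ 0 := fun hc => hj (Fin.ext hc)
    have hi1 : (i : ℕ) - 1 < n₁ := by omega
    have hj1 : (j : ℕ) - 1 < n₂ := by omega
    have e1 : (S * T₁ * Zᵀ) i j = (S * T₁) i ⟨(j : ℕ) - 1, hj1⟩ :=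
      myMulShiftT _ _ _ _ (by simp; omega)
    have e2 : (S * T₁) i ⟨(j : ℕ) - 1, hj1⟩ = T₁ ⟨(i : ℕ) - 1, hi1⟩ ⟨(j : ℕ) - 1, hj1⟩ :=
      myShiftMul _ _ _ _ (by simp; omega)
    have e3 : T₁ ⟨(i : ℕ) - 1, hi1⟩ ⟨(j : ℕ) - 1, hj1⟩ = T₁ i j := by
      rw [hf, hf]
      congr 1
      simp only [Fin.val_mk] at *
      omega
    simp only [hA, Matrix.sub_apply, e1, e2, e3, sub_self]
  have hBr : B.rank ≤ 2 := by
    refine myRankLeTwo B ⟨n₂ - 1, by omega⟩ ⟨0, h1⟩ ?_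
    intro i j hi hj
    have hi' : (i : ℕ) ≠ n₂ - 1 := fun hc => hi (Fin.ext (by simpa using hc))
    have hj' : (j : ℕ) ≠ 0 := fun hc => hj (Fin.ext hc)
    have hi1 : (i : ℕ) + 1 < n₂ := by omega
    have hj1 : (j : ℕ) - 1 < n₁ := by omega
    have e1 : (Zᵀ * T₂) i j = T₂ ⟨(i : ℕ) + 1, hi1⟩ j :=
      myShiftTMul _ _ _ _ (by simp)
    have e2 : (T₂ * Sᵀ) i j = T₂ i ⟨(j : ℕ) - 1, hj1⟩ :=
      myMulShiftT _ _ _ _ (by simp; omega)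
    have e3 : T₂ ⟨(i : ℕ) + 1, hi1⟩ j = T₂ i ⟨(j : ℕ) - 1, hj1⟩ := by
      rw [hg, hg]
      congr 1
      simp only [Fin.val_mk] at *
      omega
    simp only [hB, Matrix.sub_apply, e1, e2, e3, sub_self]
  calc (A * T₂ + (S * T₁) * B).rank
      ≤ (A * T₂).rank + ((S * T₁) * B).rank := myRankAddLe _ _
    _ ≤ A.rank + B.rank :=
        add_le_add (Matrix.rank_mul_le_left _ _) (Matrix.rank_mul_le_right _ _)
    _ ≤ 2 + 2 := add_le_add hAr hBr
end

section
/- Let P be an n×n real orthogonal matrix and let A be an n×n real matrix that is P-symmetric, i.e. P·A·Pᵀ = Aᵀ. Let A⁻ be the Moore–Penrose pseudo-inverse of A, i.e. an n×n real matrix satisfying A·A⁻·A = A, A⁻·A·A⁻ = A⁻, (A·A⁻)ᵀ = A·A⁻ and (A⁻·A)ᵀ = A⁻·A. Then A⁻ is also P-symmetric: P·A⁻·Pᵀ = (A⁻)ᵀ. -/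
open Matrix

private lemma pinv_unique {n : ℕ} (M X Y : Matrix (Fin n) (Fin n) ℝ)
    (hx1 : M * X * M = M) (hx2 : X * M * X = X)
    (hx3 : (M * X)ᵀ = M * X) (hx4 : (X * M)ᵀ = X * M)
    (hy1 : M * Y * M = M) (hy2 : Y * M * Y = Y)
    (hy3 : (M * Y)ᵀ = M * Y) (hy4 : (Y * M)ᵀ = Y * M) :
    X = Y := by
  have hMX : M * X = M * Y := by
    calc M * X = (M * X)ᵀ := hx3.symm
    _ = Xᵀ * Mᵀ := by rw [transpose_mul]
    _ = Xᵀ * (M * Y * M)ᵀ := by rw [hy1]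
    _ = Xᵀ * (Mᵀ * (M * Y)ᵀ) := by rw [transpose_mul]
    _ = Xᵀ * Mᵀ * (M * Y) := by rw [hy3]; noncomm_ring
    _ = (M * X)ᵀ * (M * Y) := by rw [transpose_mul]
    _ = M * X * (M * Y) := by rw [hx3]
    _ = (M * X * M) * Y := by noncomm_ring
    _ = M * Y := by rw [hx1]
  have hXM : X * M = Y * M := by
    calc X * M = (X * M)ᵀ := hx4.symm
    _ = Mᵀ * Xᵀ := by rw [transpose_mul]
    _ = (M * Y * M)ᵀ * Xᵀ := by rw [hy1]
    _ = (Y * M)ᵀ * Mᵀ * Xᵀ := by simp only [transpose_mul]; noncomm_ring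
    _ = Y * M * Mᵀ * Xᵀ := by rw [hy4]
    _ = Y * M * (X * M)ᵀ := by rw [transpose_mul]; noncomm_ring
    _ = Y * M * (X * M) := by rw [hx4]
    _ = Y * (M * X * M) := by noncomm_ring
    _ = Y * M := by rw [hx1]
  calc X = X * M * X := hx2.symm
  _ = Y * M * X := by rw [hXM]
  _ = Y * (M * X) := by noncomm_ring
  _ = Y * (M * Y) := by rw [hMX]
  _ = Y * M * Y := by noncomm_ring
  _ = Y := hy2

theorem P_symmetric_pseudoinverse (n : ℕ) (P A B : Matrix (Fin n) (Fin n) ℝ)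
    (hP : P * Pᵀ = 1) (hsym : P * A * Pᵀ = Aᵀ)
    (h1 : A * B * A = A) (h2 : B * A * B = B)
    (h3 : (A * B)ᵀ = A * B) (h4 : (B * A)ᵀ = B * A) :
    P * B * Pᵀ = Bᵀ := by
  have hP' : Pᵀ * P = 1 := mul_eq_one_comm.mp hP
  set M := Aᵀ
  set Y := P * B * Pᵀ
  -- Bᵀ is a pseudoinverse of Aᵀ
  have hx1 : M * Bᵀ * M = M := by
    simp only [M, ← transpose_mul]
    rw [show A * (B * A) = A * B * A by noncomm_ring, h1]
  have hx2 : Bᵀ * M * Bᵀ = Bᵀ := by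
    simp only [M, ← transpose_mul]
    rw [show B * (A * B) = B * A * B by noncomm_ring, h2]
  have hx3 : (M * Bᵀ)ᵀ = M * Bᵀ := by
    simp only [M, ← transpose_mul]
    rw [transpose_transpose, h4]
  have hx4 : (Bᵀ * M)ᵀ = Bᵀ * M := by
    simp only [M, ← transpose_mul]
    rw [transpose_transpose, h3]
  -- P B Pᵀ is a pseudoinverse of Aᵀ = P A Pᵀ
  have hM : M = P * A * Pᵀ := hsym.symm
  have key : ∀ C D : Matrix (Fin n) (Fin n) ℝ,
      (P * C * Pᵀ) * (P * D * Pᵀ) = P * (C * D) * Pᵀ := by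
    intro C D
    calc (P * C * Pᵀ) * (P * D * Pᵀ) = P * C * (Pᵀ * P) * D * Pᵀ := by noncomm_ring
    _ = P * (C * D) * Pᵀ := by rw [hP']; noncomm_ring
  have hy1 : M * Y * M = M := by
    rw [hM, key, key, show A * B * A = A from h1]
  have hy2 : Y * M * Y = Y := by
    rw [hM]; show (P * B * Pᵀ) * _ * _ = _
    rw [key, key, show B * A * B = B from h2]
  have htr : ∀ C : Matrix (Fin n) (Fin n) ℝ, (P * C * Pᵀ)ᵀ = P * Cᵀ * Pᵀ := by
    intro C
    rw [transpose_mul, transpose_mul, transpose_transpose]; noncomm_ring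
  have hy3 : (M * Y)ᵀ = M * Y := by
    rw [hM, key, htr, h3]
  have hy4 : (Y * M)ᵀ = Y * M := by
    rw [hM]; show ((P * B * Pᵀ) * _)ᵀ = _
    rw [key, htr, h4]
  exact (pinv_unique M Bᵀ Y hx1 hx2 hx3 hx4 hy1 hy2 hy3 hy4).symm
end
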